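/- The no-mixed-state assumption cannot be dropped for deadlock-freeness preservation: there exist two communicating systems S_1 and S_2 over disjoint participant sets, a set of interfaces H = {h_1, h_2} for {S_1, S_2} (whose interface CFSMs contain mixed states), a connection model CM for H, and a connection policy K for H complying with CM, such that S_1, S_2 and K are all deadlock-free, but the initial configuration of the multicomposition MC({S_1, S_2}, K) is a deadlock configuration, so MC({S_1, S_2}, K) is not deadlock-free. -/

import Mathlib

namespace CFSM

/-- Direction of a communication action: output (`!`) or input (`?`). -/
inductive Dir : Type where
  | out : Dir
  | inp : Dir
deriving DecidableEq

instance : Fintype Dir :=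
  ⟨{Dir.out, Dir.inp}, fun x => by cases x <;> simp⟩

/-- An action `pq!a` (output) or `pq?a` (input) over participants `P` and messages `A`:
`snd` is the sender `p`, `rcv` the receiver `q`, `msg` the message `a`. -/
structure Act (P : Type) (A : Type) : Type where
  snd : P
  rcv : P
  dir : Dir
  msg : A

instance {P A : Type} [Finite P] [Finite A] : Finite (Act P A) :=
  Finite.of_injective (fun l => (l.snd, l.rcv, l.dir, l.msg))
    (fun a b h => by
      cases a; cases b
      simp only [Prod.mk.injEq] at h
      obtain ⟨h1, h2, h3, h4⟩ := h
      subst h1; subst h2; subst h3; subst h4; rfl)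

/-- The subject of an action: the sender of an output, the receiver of an input. -/
def Act.subject {P A : Type} (l : Act P A) : P :=
  match l.dir with
  | .out => l.snd
  | .inp => l.rcv

/-- A communicating system over participants `P` and messages `A`:
one machine (state type, initial state and transition relation) per participant. -/
structure CS (P : Type) (A : Type) : Type 1 where
  St : P → Type
  init : ∀ p, St p
  delta : ∀ p, Set (St p × Act P A × St p)

/-- All actions of the machine of participant `p` have subject `p`
(the name of the machine) and distinct endpoints. -/
def CS.WellFormed {P A : Type} (S : CS P A) : Prop :=
  ∀ p t, t ∈ S.delta p → ((t.2.1 : Act P A).subject = p ∧ t.2.1.snd ≠ t.2.1.rcv)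

/-- A configuration: a local state for each machine and a FIFO buffer
for each ordered pair of participants. -/
structure Config {P A : Type} (S : CS P A) : Type where
  st : ∀ p, S.St p
  ch : P → P → List A

/-- The initial configuration: all machines in their initial state, all channels empty. -/
def CS.initConfig {P A : Type} (S : CS P A) : Config S :=
  ⟨S.init, fun _ _ => []⟩

/-- The labelled transition relation between configurations. -/
def StepL {P A : Type} (S : CS P A) (c : Config S) (l : Act P A) (c' : Config S) : Prop :=
  match l.dir with
  | .out =>
      (c.st l.snd, l, c'.st l.snd) ∈ S.delta l.snd ∧
      (∀ p, p ≠ l.snd → c'.st p = c.st p) ∧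
      c'.ch l.snd l.rcv = c.ch l.snd l.rcv ++ [l.msg] ∧
      (∀ p q, (p, q) ≠ (l.snd, l.rcv) → c'.ch p q = c.ch p q)
  | .inp =>
      (c.st l.rcv, l, c'.st l.rcv) ∈ S.delta l.rcv ∧
      (∀ p, p ≠ l.rcv → c'.st p = c.st p) ∧
      c.ch l.snd l.rcv = l.msg :: c'.ch l.snd l.rcv ∧
      (∀ p q, (p, q) ≠ (l.snd, l.rcv) → c'.ch p q = c.ch p q)

/-- Unlabelled transition relation. -/
def Step {P A : Type} (S : CS P A) (c c' : Config S) : Prop :=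
  ∃ l, StepL S c l c'

/-- Reachability between configurations. -/
def Reach {P A : Type} (S : CS P A) : Config S → Config S → Prop :=
  Relation.ReflTransGen (Step S)

/-- The set of configurations reachable from the initial configuration. -/
def RC {P A : Type} (S : CS P A) : Set (Config S) :=
  {c | Reach S S.initConfig c}

/-- A local state is final if it has no outgoing transition. -/
def FinalSt {Q P A : Type} (δ : Set (Q × Act P A × Q)) (q : Q) : Prop :=
  ∀ l q', (q, l, q') ∉ δ

/-- A local state is receiving if it is not final and all its outgoing
transitions are labelled with input actions. -/
def ReceivingSt {Q P A : Type} (δ : Set (Q × Act P A × Q)) (q : Q) : Prop :=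
  (∃ l q', (q, l, q') ∈ δ) ∧ ∀ l q', (q, l, q') ∈ δ → (l : Act P A).dir = Dir.inp

/-- A local state is mixed if it has at least one outgoing output-labelled
transition and at least one outgoing input-labelled transition. -/
def MixedSt {Q P A : Type} (δ : Set (Q × Act P A × Q)) (q : Q) : Prop :=
  (∃ l q', (q, l, q') ∈ δ ∧ (l : Act P A).dir = Dir.out) ∧
  (∃ l q', (q, l, q') ∈ δ ∧ (l : Act P A).dir = Dir.inp)

/-- A machine has no mixed states. -/
def NoMixed {Q P A : Type} (δ : Set (Q × Act P A × Q)) : Prop :=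
  ∀ q, ¬ MixedSt δ q

/-- Deadlock configuration: all channels empty but all machines in receiving states. -/
def DeadlockConfig {P A : Type} (S : CS P A) (c : Config S) : Prop :=
  (∀ p q, c.ch p q = []) ∧ ∀ p, ReceivingSt (S.delta p) (c.st p)

def DeadlockFree {P A : Type} (S : CS P A) : Prop :=
  ∀ c ∈ RC S, ¬ DeadlockConfig S c

/-- Orphan-message configuration: all machines final but some channel nonempty. -/
def OrphanConfig {P A : Type} (S : CS P A) (c : Config S) : Prop :=
  (∀ p, FinalSt (S.delta p) (c.st p)) ∧ ∃ p q, c.ch p q ≠ []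

def OrphanFree {P A : Type} (S : CS P A) : Prop :=
  ∀ c ∈ RC S, ¬ OrphanConfig S c

/-- Unspecified reception configuration: some machine `r` is in a receiving state and,
for every input transition of `r`, the corresponding channel is nonempty with a
first element different from the expected message. -/
def URConfig {P A : Type} (S : CS P A) (c : Config S) : Prop :=
  ∃ r, ReceivingSt (S.delta r) (c.st r) ∧
    ∀ s a q', (c.st r, Act.mk s r Dir.inp a, q') ∈ S.delta r →
      (c.ch s r ≠ [] ∧ ¬ ∃ w, c.ch s r = a :: w)

def ReceptionErrorFree {P A : Type} (S : CS P A) : Prop :=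
  ∀ c ∈ RC S, ¬ URConfig S c

/-- Progress: every reachable configuration has an outgoing transition or all
machines are in final states. -/
def ProgressProp {P A : Type} (S : CS P A) : Prop :=
  ∀ c ∈ RC S, (∃ c', Step S c c') ∨ ∀ p, FinalSt (S.delta p) (c.st p)

/-- `p`-lock configuration: `p` is in a receiving state and never occurs as the
subject of an action in any transition sequence from `c`. -/
def PLockConfig {P A : Type} (S : CS P A) (c : Config S) (p : P) : Prop :=
  ReceivingSt (S.delta p) (c.st p) ∧
  ∀ c1 l c2, Reach S c c1 → StepL S c1 l c2 → l.subject ≠ p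

def LockFree {P A : Type} (S : CS P A) : Prop :=
  ∀ c ∈ RC S, ∀ p, ¬ PLockConfig S c p

section Composition

variable {I : Type} {P : I → Type} {A : Type}

/-- Messages occurring in input actions of the machine of `p`. -/
def inMsgs {Pp A : Type} (S : CS Pp A) (p : Pp) : Set A :=
  {a | ∃ q s q', (q, Act.mk s p Dir.inp a, q') ∈ S.delta p}

/-- Messages occurring in output actions of the machine of `p`. -/
def outMsgs {Pp A : Type} (S : CS Pp A) (p : Pp) : Set A :=
  {a | ∃ q r q', (q, Act.mk p r Dir.out a, q') ∈ S.delta p}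

/-- `CM` is a connection model for the interfaces `hh i` of the family `S`
(the interface `h_i` is represented by its index `i`). -/
def IsConnModel (S : ∀ i, CS (P i) A) (hh : ∀ i, P i) (CM : Set (I × A × I)) : Prop :=
  ∀ i a,
    (a ∈ inMsgs (S i) (hh i) →
      ∃ j, j ≠ i ∧ a ∈ outMsgs (S j) (hh j) ∧ (i, a, j) ∈ CM) ∧
    (a ∈ outMsgs (S i) (hh i) →
      ∃ j, j ≠ i ∧ a ∈ inMsgs (S j) (hh j) ∧ (j, a, i) ∈ CM)

/-- `CM` is a strong connection model: additionally the connecting partner is unique. -/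
def IsStrongConnModel (S : ∀ i, CS (P i) A) (hh : ∀ i, P i) (CM : Set (I × A × I)) : Prop :=
  IsConnModel S hh CM ∧
  ∀ i a,
    (a ∈ inMsgs (S i) (hh i) → ∃! j, (i, a, j) ∈ CM) ∧
    (a ∈ outMsgs (S i) (hh i) → ∃! j, (j, a, i) ∈ CM)

/-- Conditions (*) and (**) for a candidate transition relation `d` of the local
connection policy of interface `hh i` (the name `k_i` is represented by `i`). -/
def PolicySat (S : ∀ i, CS (P i) A) (hh : ∀ i, P i) (CM : Set (I × A × I)) (i : I)
    (d : Set ((S i).St (hh i) × Act I A × (S i).St (hh i))) : Prop :=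
  (∀ q r a q', (q, Act.mk r (hh i) Dir.inp a, q') ∈ (S i).delta (hh i) →
      ∃ j, j ≠ i ∧ (i, a, j) ∈ CM ∧ (q, Act.mk i j Dir.out a, q') ∈ d) ∧
  (∀ q r a q', (q, Act.mk (hh i) r Dir.out a, q') ∈ (S i).delta (hh i) →
      ∃ j, j ≠ i ∧ (j, a, i) ∈ CM ∧ (q, Act.mk j i Dir.inp a, q') ∈ d)

/-- `d` belongs to the local connection policy set `IS(M_{h_i}, CM)`:
it is a minimal relation satisfying (*) and (**).  (The states `q̇` of the
policy machine are identified with the states `q` of `M_{h_i}`.) -/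
def InIS (S : ∀ i, CS (P i) A) (hh : ∀ i, P i) (CM : Set (I × A × I)) (i : I)
    (d : Set ((S i).St (hh i) × Act I A × (S i).St (hh i))) : Prop :=
  PolicySat S hh CM i d ∧ ∀ d', d' ⊆ d → PolicySat S hh CM i d' → d' = d

/-- The communicating system (over the participant type `I` of names `k_i`)
determined by the family of transition relations `Kd` of a connection policy. -/
def policyCS (S : ∀ i, CS (P i) A) (hh : ∀ i, P i)
    (Kd : ∀ i, Set ((S i).St (hh i) × Act I A × (S i).St (hh i))) : CS I A where
  St := fun i => (S i).St (hh i)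
  init := fun i => (S i).init (hh i)
  delta := Kd

/-- `Kd` is a connection policy for the interfaces `hh` complying with `CM`. -/
def IsConnPolicy (S : ∀ i, CS (P i) A) (hh : ∀ i, P i) (CM : Set (I × A × I))
    (Kd : ∀ i, Set ((S i).St (hh i) × Act I A × (S i).St (hh i))) : Prop :=
  ∀ i, InIS S hh CM i (Kd i)

/-- States of the gateway for interface `hh i`: the original states plus one
fresh state per transition of `M_{h_i}`. -/
abbrev GWState (S : ∀ i, CS (P i) A) (hh : ∀ i, P i) (i : I) : Type :=
  (S i).St (hh i) ⊕ ((S i).St (hh i) × Act (P i) A × (S i).St (hh i))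

/-- Lifting of a local action of system `i` to the composed participant type. -/
def liftAct (i : I) (l : Act (P i) A) : Act ((j : I) × P j) A :=
  Act.mk ⟨i, l.snd⟩ ⟨i, l.rcv⟩ l.dir l.msg

/-- Transition relation of the gateway `M_{h_i} ⟲ M_{k_i}`. -/
def GWdelta (S : ∀ i, CS (P i) A) (hh : ∀ i, P i)
    (Kd : ∀ i, Set ((S i).St (hh i) × Act I A × (S i).St (hh i))) (i : I) :
    Set (GWState S hh i × Act ((j : I) × P j) A × GWState S hh i) :=
  {x | ∃ q a q',
    (∃ s r, (q, Act.mk (hh i) s Dir.out a, q') ∈ (S i).delta (hh i) ∧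
        (q, Act.mk r i Dir.inp a, q') ∈ Kd i ∧
        (x = (Sum.inl q, Act.mk ⟨r, hh r⟩ ⟨i, hh i⟩ Dir.inp a,
              Sum.inr (q, Act.mk (hh i) s Dir.out a, q')) ∨
         x = (Sum.inr (q, Act.mk (hh i) s Dir.out a, q'),
              Act.mk ⟨i, hh i⟩ ⟨i, s⟩ Dir.out a, Sum.inl q'))) ∨
    (∃ s r, (q, Act.mk s (hh i) Dir.inp a, q') ∈ (S i).delta (hh i) ∧
        (q, Act.mk i r Dir.out a, q') ∈ Kd i ∧
        (x = (Sum.inl q, Act.mk ⟨i, s⟩ ⟨i, hh i⟩ Dir.inp a,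
              Sum.inr (q, Act.mk s (hh i) Dir.inp a, q')) ∨
         x = (Sum.inr (q, Act.mk s (hh i) Dir.inp a, q'),
              Act.mk ⟨i, hh i⟩ ⟨r, hh r⟩ Dir.out a, Sum.inl q')))}

open Classical in
/-- State type of the machine of participant `⟨i, p⟩` in the multicomposition:
the gateway state type if `p` is the interface of system `i`, the original
state type otherwise. -/
noncomputable def MCSt (S : ∀ i, CS (P i) A) (hh : ∀ i, P i) (x : (i : I) × P i) : Type :=
  if x.2 = hh x.1 then GWState S hh x.1 else (S x.1).St x.2

/-- The multicomposition `MC({S_i}, K)`: all machines of the single systems,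
with the machine of each interface `hh i` replaced by its gateway. -/
noncomputable def MC (S : ∀ i, CS (P i) A) (hh : ∀ i, P i)
    (Kd : ∀ i, Set ((S i).St (hh i) × Act I A × (S i).St (hh i))) :
    CS ((i : I) × P i) A where
  St := MCSt S hh
  init := fun x => by
    by_cases hp : x.2 = hh x.1
    · have h : MCSt S hh x = GWState S hh x.1 := by simp [MCSt, hp]
      rw [h]; exact Sum.inl ((S x.1).init (hh x.1))
    · have h : MCSt S hh x = (S x.1).St x.2 := by simp [MCSt, hp]
      rw [h]; exact (S x.1).init x.2
  delta := fun x => by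
    by_cases hp : x.2 = hh x.1
    · have h : MCSt S hh x = GWState S hh x.1 := by simp [MCSt, hp]
      rw [h]; exact GWdelta S hh Kd x.1
    · have h : MCSt S hh x = (S x.1).St x.2 := by simp [MCSt, hp]
      rw [h]
      exact {t | ∃ q l q', (q, l, q') ∈ (S x.1).delta x.2 ∧ t = (q, liftAct x.1 l, q')}

/-- The state of the gateway of interface `hh i` in a configuration of the
multicomposition, as an element of `GWState`. -/
noncomputable def toGW (S : ∀ i, CS (P i) A) (hh : ∀ i, P i) (i : I)
    (x : MCSt S hh ⟨i, hh i⟩) : GWState S hh i :=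
  cast (by simp [MCSt]) x

/-- The state of a non-interface participant in a configuration of the
multicomposition, as an element of its original state type. -/
noncomputable def toLoc (S : ∀ i, CS (P i) A) (hh : ∀ i, P i) {i : I} {p : P i}
    (hp : p ≠ hh i) (x : MCSt S hh ⟨i, p⟩) : (S i).St p :=
  cast (by simp [MCSt, hp]) x

/-- Projection of a configuration of the multicomposition to system `S i`,
assuming the gateway state of `hh i` is not a fresh intermediate state
(i.e. it is of the form `Sum.inl q`). -/
noncomputable def projSys (S : ∀ i, CS (P i) A) (hh : ∀ i, P i)
    (Kd : ∀ i, Set ((S i).St (hh i) × Act I A × (S i).St (hh i)))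
    (i : I) (s : Config (MC S hh Kd))
    (hq : ∃ q, toGW S hh i (s.st ⟨i, hh i⟩) = Sum.inl q) : Config (S i) where
  st := fun p => by
    by_cases hp : p = hh i
    · rw [hp]; exact hq.choose
    · exact toLoc S hh hp (s.st ⟨i, p⟩)
  ch := fun p q => s.ch ⟨i, p⟩ ⟨i, q⟩

/-- Projection of a configuration of the multicomposition to the connection
policy `K`, assuming no gateway is in a fresh intermediate state. -/
noncomputable def projPolicy (S : ∀ i, CS (P i) A) (hh : ∀ i, P i)
    (Kd : ∀ i, Set ((S i).St (hh i) × Act I A × (S i).St (hh i)))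
    (s : Config (MC S hh Kd))
    (hq : ∀ i, ∃ q, toGW S hh i (s.st ⟨i, hh i⟩) = Sum.inl q) :
    Config (policyCS S hh Kd) where
  st := fun i => (hq i).choose
  ch := fun i j => s.ch ⟨i, hh i⟩ ⟨j, hh j⟩

end Composition
namespace Ctr
open CFSM

def dH : Set (Bool × Act Bool Unit × Bool) :=
  {(false, ⟨false, true, .out, ()⟩, true), (false, ⟨true, false, .inp, ()⟩, true)}
def dR : Set (Bool × Act Bool Unit × Bool) :=
  {(false, ⟨false, true, .inp, ()⟩, true)}

def S0 : ∀ _ : Bool, CS Bool Unit := fun _ =>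
  { St := fun _ => Bool
    init := fun _ => false
    delta := fun p => match p with | false => dH | true => dR }

def hh0 : ∀ _ : Bool, Bool := fun _ => false

def Kd0 : ∀ b : Bool, Set ((S0 b).St (hh0 b) × Act Bool Unit × (S0 b).St (hh0 b)) := fun b =>
  {(false, ⟨b, !b, .out, ()⟩, true), (false, ⟨!b, b, .inp, ()⟩, true)}

lemma mem_mpr_set {X Y : Type _} (e : Set X = Set Y) (h : X = Y) (s : Set Y) (t : X) :
    t ∈ Eq.mpr e s ↔ cast h t ∈ s := by subst h; exact Iff.rfl

lemma cast_triple {X Y A : Type _} (h : X = Y) (e : (X × A × X) = (Y × A × Y)) (t : X × A × X) :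
    cast e t = (cast h t.1, t.2.1, cast h t.2.2) := by subst h; rfl

lemma mpr_cast {X Y : Type _} (e : X = Y) (h : X = Y) (v : Y) :
    cast h (Eq.mpr e v) = v := by subst h; rfl

lemma cast_cast' {X Y : Type _} (h h' : X = Y) (v : Y) :
    cast h (cast h'.symm v) = v := by subst h; rfl

lemma hGW (i : Bool) : (MCSt S0 hh0 ⟨i, false⟩ × Act ((j : Bool) × Bool) Unit × MCSt S0 hh0 ⟨i, false⟩)
    = (GWState S0 hh0 i × Act ((j : Bool) × Bool) Unit × GWState S0 hh0 i) := by
  simp [MCSt, hh0]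

lemma hGW1 (i : Bool) : MCSt S0 hh0 ⟨i, false⟩ = GWState S0 hh0 i := by simp [MCSt, hh0]

lemma hLoc1 (i : Bool) : MCSt S0 hh0 ⟨i, true⟩ = Bool := by simp [MCSt, hh0, S0]

lemma deltaGW (i : Bool) (t : MCSt S0 hh0 ⟨i, false⟩ × Act ((j : Bool) × Bool) Unit × MCSt S0 hh0 ⟨i, false⟩) :
    t ∈ (MC S0 hh0 Kd0).delta ⟨i, false⟩ ↔
      (cast (hGW1 i) t.1, t.2.1, cast (hGW1 i) t.2.2) ∈ GWdelta S0 hh0 Kd0 i := by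
  simp only [MC]
  rw [dif_pos (show false = hh0 i from rfl)]
  erw [mem_mpr_set _ (hGW i)]
  rw [cast_triple (hGW1 i)]

lemma deltaLoc (i : Bool) (t : MCSt S0 hh0 ⟨i, true⟩ × Act ((j : Bool) × Bool) Unit × MCSt S0 hh0 ⟨i, true⟩) :
    t ∈ (MC S0 hh0 Kd0).delta ⟨i, true⟩ ↔
      (cast (hLoc1 i) t.1, t.2.1, cast (hLoc1 i) t.2.2) ∈
        {u : Bool × Act ((j : Bool) × Bool) Unit × Bool |
          ∃ q l q', (q, l, q') ∈ dR ∧ u = (q, liftAct i l, q')} := by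
  simp only [MC]
  rw [dif_neg (show ¬ (true = hh0 i) from by simp [hh0])]
  erw [mem_mpr_set _ (by rw [hLoc1 i]; rfl)]
  erw [cast_triple (hLoc1 i)]
  exact Iff.rfl

lemma initGW (i : Bool) : cast (hGW1 i) ((MC S0 hh0 Kd0).init ⟨i, false⟩) = Sum.inl false := by
  simp only [MC]
  rw [dif_pos (show false = hh0 i from rfl)]
  exact mpr_cast _ _ _

lemma initLoc (i : Bool) : cast (hLoc1 i) ((MC S0 hh0 Kd0).init ⟨i, true⟩) = false := by
  simp only [MC]
  rw [dif_neg (show ¬ (true = hh0 i) from by simp [hh0])]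
  exact mpr_cast _ _ _

end Ctr

end CFSM

open CFSM CFSM.Ctr in
/-- the no-mixed-state assumption cannot be dropped for
deadlock-freeness preservation. -/
theorem deadlockFree_not_preserved_with_mixed_states :
    ∃ (P : Bool → Type) (A : Type) (S : ∀ b, CS (P b) A) (hh : ∀ b, P b)
      (CM : Set (Bool × A × Bool))
      (Kd : ∀ b, Set ((S b).St (hh b) × Act Bool A × (S b).St (hh b))),
      (∀ b, Finite (P b)) ∧ Finite A ∧ (∀ b p, Finite ((S b).St p)) ∧
      (∀ b, (S b).WellFormed) ∧
      (∀ b, ∃ q, MixedSt ((S b).delta (hh b)) q) ∧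
      IsConnModel S hh CM ∧
      IsConnPolicy S hh CM Kd ∧
      (∀ b, DeadlockFree (S b)) ∧
      DeadlockFree (policyCS S hh Kd) ∧
      DeadlockConfig (MC S hh Kd) (MC S hh Kd).initConfig ∧
      ¬ DeadlockFree (MC S hh Kd) := by
  have hdl : DeadlockConfig (MC S0 hh0 Kd0) (MC S0 hh0 Kd0).initConfig := by
    refine ⟨fun _ _ => rfl, ?_⟩
    rintro ⟨i, p⟩
    cases p
    · -- gateway: receiving
      constructor
      · refine ⟨⟨⟨!i, false⟩, ⟨i, false⟩, .inp, ()⟩,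
          cast (hGW1 i).symm (Sum.inr (false, ⟨false, true, .out, ()⟩, true)), ?_⟩
        erw [deltaGW]
        rw [show ((MC S0 hh0 Kd0).initConfig.st ⟨i, false⟩) = (MC S0 hh0 Kd0).init ⟨i, false⟩ from rfl]
        rw [initGW]; erw [cast_cast' (hGW1 i) (hGW1 i)]
        refine ⟨false, (), true, Or.inl ⟨true, !i, Or.inl rfl, Or.inr rfl, Or.inl rfl⟩⟩
      · intro l q' hl
        erw [deltaGW] at hl
        rw [show ((MC S0 hh0 Kd0).initConfig.st ⟨i, false⟩) = (MC S0 hh0 Kd0).init ⟨i, false⟩ from rfl,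
          initGW] at hl
        obtain ⟨q, a, q2, h⟩ := hl
        rcases h with ⟨s, r, _, _, h | h⟩ | ⟨s, r, _, _, h | h⟩ <;>
          replace h := And.imp_right Prod.mk.inj (Prod.mk.inj h)
        · exact (show l = _ from h.2.1) ▸ rfl
        · exact absurd h.1 (by simp)
        · exact (show l = _ from h.2.1) ▸ rfl
        · exact absurd h.1 (by simp)
    · -- local machine: receiving
      constructor
      · refine ⟨⟨⟨i, false⟩, ⟨i, true⟩, .inp, ()⟩, cast (hLoc1 i).symm true, ?_⟩
        erw [deltaLoc]
        rw [show ((MC S0 hh0 Kd0).initConfig.st ⟨i, true⟩) = (MC S0 hh0 Kd0).init ⟨i, true⟩ from rfl]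
        rw [initLoc]; erw [cast_cast' (hLoc1 i) (hLoc1 i)]
        exact ⟨false, ⟨false, true, .inp, ()⟩, true, rfl, rfl⟩
      · intro l q' hl
        erw [deltaLoc] at hl
        obtain ⟨q, l0, q2, hmem, heq⟩ := hl
        simp only [dR, Set.mem_singleton_iff, Prod.mk.injEq] at hmem
        obtain ⟨-, hl0, -⟩ := hmem
        simp only [Prod.mk.injEq] at heq
        rw [heq.2.1, hl0]; rfl
  refine ⟨fun _ => Bool, Unit, S0, hh0, {x | x.1 ≠ x.2.2}, Kd0, ?_, ?_, ?_, ?_, ?_, ?_, ?_, ?_, ?_, hdl, ?_⟩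
  · exact fun _ => inferInstance
  · exact inferInstance
  · exact fun _ _ => inferInstanceAs (Finite Bool)
  · -- WellFormed
    intro b p t ht
    cases p
    · rcases (ht : t ∈ dH) with h | h <;> subst h <;> exact ⟨rfl, by simp⟩
    · have h : t = ((false : Bool), (⟨false, true, .inp, ()⟩ : Act Bool Unit), true) := ht
      subst h; exact ⟨rfl, by simp⟩
  · -- Mixed state
    intro b
    exact ⟨false,
      ⟨⟨⟨false, true, .out, ()⟩, true, Or.inl rfl, rfl⟩,
       ⟨⟨true, false, .inp, ()⟩, true, Or.inr rfl, rfl⟩⟩⟩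
  · -- connection model
    intro i a
    constructor
    · intro _
      exact ⟨!i, by cases i <;> simp, ⟨false, true, true, Or.inl rfl⟩, by cases i <;> simp⟩
    · intro _
      exact ⟨!i, by cases i <;> simp, ⟨false, true, true, Or.inr rfl⟩, by cases i <;> simp⟩
  · -- connection policy
    intro i
    constructor
    · constructor
      · intro q r a q' h
        change Bool at q q'
        change (q, Act.mk r false Dir.inp a, q') ∈ dH at h
        simp only [S0, hh0, dH, Set.mem_insert_iff, Set.mem_singleton_iff,
          Prod.mk.injEq, Act.mk.injEq] at h
        rcases h with ⟨_, ⟨_, _, h, _⟩, _⟩ | ⟨hq, ⟨hr, _, _, _⟩, hq'⟩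
        · exact absurd h (by simp)
        · subst hq; subst hq'; subst hr
          exact ⟨!i, by cases i <;> simp, by cases i <;> simp, Or.inl rfl⟩
      · intro q r a q' h
        change Bool at q q'
        change (q, Act.mk false r Dir.out a, q') ∈ dH at h
        simp only [S0, hh0, dH, Set.mem_insert_iff, Set.mem_singleton_iff,
          Prod.mk.injEq, Act.mk.injEq] at h
        rcases h with ⟨hq, ⟨_, hr, _, _⟩, hq'⟩ | ⟨_, ⟨h, _, _, _⟩, _⟩
        · subst hq; subst hq'; subst hr
          exact ⟨!i, by cases i <;> simp, by cases i <;> simp, Or.inr rfl⟩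
        · exact absurd h (by simp)
    · -- minimality
      intro d' hsub hsat
      have h1 : ((false : Bool), (⟨i, !i, .out, ()⟩ : Act Bool Unit), true) ∈ d' := by
        obtain ⟨j, hj, _, hmem⟩ := hsat.1 false true () true (Or.inr rfl)
        have : j = !i := by revert hj; cases i <;> cases j <;> simp
        subst this; exact hmem
      have h2 : ((false : Bool), (⟨!i, i, .inp, ()⟩ : Act Bool Unit), true) ∈ d' := by
        obtain ⟨j, hj, _, hmem⟩ := hsat.2 false true () true (Or.inl rfl)
        have : j = !i := by revert hj; cases i <;> cases j <;> simp
        subst this; exact hmem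
      refine Set.Subset.antisymm hsub ?_
      intro x hx
      rcases hx with h | h
      · subst h; exact h1
      · erw [Set.mem_singleton_iff] at h; subst h; exact h2
  · -- S0 deadlock free
    intro b c _ ⟨_, hrecv⟩
    have h := hrecv false
    simp only [S0] at h
    rcases hb : (c.st false : Bool) with _ | _
    · rw [hb] at h
      have := h.2 ⟨false, true, .out, ()⟩ true (Or.inl rfl)
      simp at this
    · rw [hb] at h
      obtain ⟨l, q', hl⟩ := h.1
      rcases hl with h' | h' <;> simp [dH, Prod.ext_iff] at h' 
  · -- policy deadlock free
    intro c _ ⟨_, hrecv⟩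
    have h := hrecv false
    rcases hb : (c.st false : Bool) with _ | _
    · rw [hb] at h
      have := h.2 ⟨false, !false, .out, ()⟩ true (Or.inl rfl)
      simp at this
    · rw [hb] at h
      obtain ⟨l, q', hl⟩ := h.1
      rcases hl with h' | h' <;> cases h'
  · -- not deadlock free
    intro hdf
    exact hdf _ Relation.ReflTransGen.refl hdl
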